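/- Let F be a convex function on a finite-dimensional real inner product space whose domain lies in an affine subspace a + L. If the relative subdifferential ∂_L F(x) at a relative-interior point x contains exactly one element h, then F is differentiable at x along L (i.e., F(x+u) - F(x) - ⟨h,u⟩ = o(‖u‖) for u ∈ L) with gradient h. -/

import Mathlib

open scoped RealInnerProductSpace Pointwise

set_option maxHeartbeats 1600000 in
/-- If the relative subdifferential `∂_L F(x)` of a convex function `F` (with domain `M` contained
in the affine subspace `a + L`) at a relative-interior point `x` contains exactly one element `g`,
then `F` is differentiable at `x` along `L` with gradient `g`:
`F(x+u) - F(x) - ⟪g,u⟫ = o(‖u‖)` for `u ∈ L`. -/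
theorem unique_relative_subgradient_differentiable
    {X : Type*} [NormedAddCommGroup X] [InnerProductSpace ℝ X] [FiniteDimensional ℝ X]
    (M : Set X) (F : X → ℝ) (hconv : ConvexOn ℝ M F)
    (L : Submodule ℝ X) (a : X) (hML : M ⊆ a +ᵥ (L : Set X))
    (x : X) (hx : x ∈ M)
    (hri : ∃ ε > 0, ∀ y ∈ a +ᵥ (L : Set X), ‖y - x‖ < ε → y ∈ M)
    (g : X)
    (hunique : {h : X | h ∈ L ∧ ∀ y ∈ M, F x + ⟪h, y - x⟫ ≤ F y} = {g}) :
    ∀ ε > 0, ∃ δ > 0, ∀ u ∈ L, ‖u‖ < δ → x + u ∈ M →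
      |F (x + u) - F x - ⟪g, u⟫| ≤ ε * ‖u‖ := by
  classical
  obtain ⟨ε₀, hε₀, hball⟩ := hri
  have hgmem : g ∈ {h : X | h ∈ L ∧ ∀ y ∈ M, F x + ⟪h, y - x⟫ ≤ F y} := by
    rw [hunique]; rfl
  obtain ⟨hgL, hgsub⟩ := hgmem
  -- membership facts
  have hmemL : ∀ y ∈ M, -a + y ∈ L := by
    intro y hy
    exact Set.mem_vadd_set_iff_neg_vadd_mem.mp (hML hy)
  have hdiffL : ∀ y ∈ M, y - x ∈ L := by
    intro y hy
    have h1 := hmemL y hy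
    have h2 := hmemL x hx
    have : y - x = (-a + y) - (-a + x) := by abel
    rw [this]; exact Submodule.sub_mem L h1 h2
  have haddL : ∀ u ∈ L, x + u ∈ a +ᵥ (L : Set X) := by
    intro u hu
    apply Set.mem_vadd_set_iff_neg_vadd_mem.mpr
    rw [vadd_eq_add, show -a + (x + u) = (-a + x) + u from by abel]
    exact Submodule.add_mem L (hmemL x hx) hu
  -- difference quotient set and directional derivative
  set Q : X → Set ℝ := fun v => {r | ∃ t : ℝ, 0 < t ∧ x + t • v ∈ M ∧ r = (F (x + t • v) - F x) / t} with hQdef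
  set φ : X → ℝ := fun v => sInf (Q v) with hφdef
  have hlb : ∀ v : X, ∀ r ∈ Q v, ⟪g, v⟫ ≤ r := by
    rintro v r ⟨t, ht, hm, rfl⟩
    have h1 := hgsub _ hm
    have h2 : x + t • v - x = t • v := by abel
    rw [h2, real_inner_smul_right] at h1
    rw [le_div_iff₀ ht]
    nlinarith
  have hbdd : ∀ v : X, BddBelow (Q v) := fun v => ⟨_, hlb v⟩
  have hne : ∀ v ∈ L, (Q v).Nonempty := by
    intro v hv
    set t : ℝ := ε₀ / (2 * (‖v‖ + 1)) with htdef
    have ht : 0 < t := by positivity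
    refine ⟨_, t, ht, ?_, rfl⟩
    apply hball _ (haddL _ (Submodule.smul_mem L t hv))
    have h2 : x + t • v - x = t • v := by abel
    rw [h2, norm_smul, Real.norm_eq_abs, abs_of_pos ht]
    rw [htdef, div_mul_eq_mul_div, div_lt_iff₀ (by positivity : (0:ℝ) < 2 * (‖v‖ + 1))]
    nlinarith [norm_nonneg v]
  have hφ_le : ∀ v : X, ∀ t : ℝ, 0 < t → x + t • v ∈ M → φ v ≤ (F (x + t • v) - F x) / t :=
    fun v t ht hm => csInf_le (hbdd v) ⟨t, ht, hm, rfl⟩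
  have hφ_ge : ∀ v ∈ L, ⟪g, v⟫ ≤ φ v := fun v hv => le_csInf (hne v hv) (hlb v)
  have hφ_zero : φ 0 = 0 := by
    apply le_antisymm
    · have := hφ_le 0 1 one_pos (by simpa using hx)
      simpa using this
    · apply le_csInf (hne 0 (Submodule.zero_mem L))
      rintro r ⟨t, ht, hm, rfl⟩
      simp
  -- monotonicity of difference quotients
  have hmono : ∀ v : X, ∀ s t : ℝ, 0 < s → s ≤ t → x + t • v ∈ M →
      x + s • v ∈ M ∧ (F (x + s • v) - F x) / s ≤ (F (x + t • v) - F x) / t := by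
    intro v s t hs hst hmt
    have ht : 0 < t := lt_of_lt_of_le hs hst
    have hab : (1 - s / t) + s / t = 1 := by ring
    have ha : (0:ℝ) ≤ 1 - s / t := by
      have : s / t ≤ 1 := (div_le_one ht).mpr hst
      linarith
    have hb : (0:ℝ) ≤ s / t := by positivity
    have hpt : (1 - s / t) • x + (s / t) • (x + t • v) = x + s • v := by
      rw [smul_add, smul_smul, div_mul_cancel₀ s ht.ne']
      rw [← add_assoc, ← add_smul, hab, one_smul]
    have hmem : x + s • v ∈ M := by
      rw [← hpt]; exact hconv.1 hx hmt ha hb hab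
    refine ⟨hmem, ?_⟩
    have hF : F (x + s • v) ≤ (1 - s / t) * F x + (s / t) * F (x + t • v) := by
      have := hconv.2 hx hmt ha hb hab
      rwa [hpt] at this
    rw [div_le_div_iff₀ hs ht]
    have h3 : ((1 - s / t) * F x + s / t * F (x + t • v)) * t
        = F x * t - s * F x + s * F (x + t • v) := by field_simp
    nlinarith [mul_le_mul_of_nonneg_right hF ht.le]
  -- subadditivity
  have hφ_add : ∀ u ∈ L, ∀ v ∈ L, φ (u + v) ≤ φ u + φ v := by
    intro u hu v hv
    have key : ∀ r ∈ Q u, ∀ r' ∈ Q v, φ (u + v) ≤ r + r' := by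
      rintro r ⟨t1, ht1, hm1, rfl⟩ r' ⟨t2, ht2, hm2, rfl⟩
      set t : ℝ := t1 * t2 / (t1 + t2) with htdef
      have ht : 0 < t := by positivity
      have h12 : t1 + t2 ≠ 0 := by positivity
      have hl1 : t / t1 + t / t2 = 1 := by rw [htdef]; field_simp; ring
      have ha : (0:ℝ) ≤ t / t1 := by positivity
      have hb : (0:ℝ) ≤ t / t2 := by positivity
      have hpt : (t / t1) • (x + t1 • u) + (t / t2) • (x + t2 • v) = x + t • (u + v) := by
        rw [smul_add, smul_add, smul_smul, smul_smul,
          div_mul_cancel₀ t ht1.ne', div_mul_cancel₀ t ht2.ne', smul_add]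
        rw [show (t / t1) • x + t • u + ((t / t2) • x + t • v)
            = ((t / t1) • x + (t / t2) • x) + (t • u + t • v) from by abel,
          ← add_smul, hl1, one_smul]
      have hmem : x + t • (u + v) ∈ M := by
        rw [← hpt]; exact hconv.1 hm1 hm2 ha hb hl1
      have hF : F (x + t • (u + v)) ≤ (t / t1) * F (x + t1 • u) + (t / t2) * F (x + t2 • v) := by
        have := hconv.2 hm1 hm2 ha hb hl1
        rwa [hpt] at this
      have h0 := hφ_le (u + v) t ht hmem
      refine h0.trans ?_
      rw [div_le_iff₀ ht]
      have e1 : t / t1 * F x + t / t2 * F x = F x := by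
        rw [← add_mul, hl1, one_mul]
      have e2 : ((F (x + t1 • u) - F x) / t1) * t = (t / t1) * F (x + t1 • u) - t / t1 * F x := by
        field_simp
      have e3 : ((F (x + t2 • v) - F x) / t2) * t = (t / t2) * F (x + t2 • v) - t / t2 * F x := by
        field_simp
      nlinarith
    have h1 : ∀ r' ∈ Q v, φ (u + v) - φ u ≤ r' := by
      intro r' hr'
      have h2 : ∀ r ∈ Q u, φ (u + v) - r' ≤ r := fun r hr => by
        have := key r hr r' hr'; linarith
      have := le_csInf (hne u hu) h2
      linarith
    have := le_csInf (hne v hv) h1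
    linarith
  -- positive homogeneity
  have hφ_smul : ∀ c : ℝ, 0 < c → ∀ v ∈ L, φ (c • v) = c * φ v := by
    intro c hc v hv
    apply le_antisymm
    · have h1 : ∀ r ∈ Q v, φ (c • v) / c ≤ r := by
        rintro r ⟨t, ht, hm, rfl⟩
        have hmem : x + (t / c) • (c • v) ∈ M := by
          rwa [smul_smul, div_mul_cancel₀ t hc.ne']
        have := hφ_le (c • v) (t / c) (by positivity) hmem
        rw [smul_smul, div_mul_cancel₀ t hc.ne'] at this
        rw [div_le_iff₀ hc]
        calc φ (c • v) ≤ (F (x + t • v) - F x) / (t / c) := this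
          _ = (F (x + t • v) - F x) / t * c := by field_simp
      have := le_csInf (hne v hv) h1
      rw [div_le_iff₀ hc] at this
      linarith [this]
    · apply le_csInf (hne (c • v) (Submodule.smul_mem L c hv))
      rintro r ⟨t, ht, hm, rfl⟩
      have hmem : x + (t * c) • v ∈ M := by rwa [← smul_smul]
      have := hφ_le v (t * c) (by positivity) hmem
      calc c * φ v ≤ c * ((F (x + (t * c) • v) - F x) / (t * c)) := by nlinarith
        _ = (F (x + t • (c • v)) - F x) / t := by rw [smul_smul]; field_simp
  -- projection
  set P : X → X := fun w => ((L.orthogonalProjectionOnto w : L) : X) with hPdef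
  have hPmem : ∀ w : X, P w ∈ L := fun w => (L.orthogonalProjectionOnto w).2
  have hPid : ∀ u ∈ L, P u = u := by
    intro u hu
    exact Submodule.starProjection_eq_self_iff.mpr hu
  have hPadd : ∀ w w' : X, P (w + w') = P w + P w' := by
    intro w w'; simp [hPdef, map_add]
  have hPsmul : ∀ (c : ℝ) (w : X), P (c • w) = c • P w := by
    intro c w; simp [hPdef, map_smul]
  have hPinner : ∀ w : X, ∀ u ∈ L, ⟪P w, u⟫ = ⟪w, u⟫ := by
    intro w u hu
    rw [hPdef]
    show ⟪L.starProjection w, u⟫ = ⟪w, u⟫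
    rw [Submodule.inner_starProjection_left_eq_right, Submodule.starProjection_eq_self_iff.mpr hu]
  -- the key identity: φ agrees with ⟪g, ·⟫ on L
  have hkey : ∀ v ∈ L, φ v = ⟪g, v⟫ := by
    intro v hv
    rcases eq_or_ne v 0 with rfl | hv0
    · rw [hφ_zero, inner_zero_right]
    · -- sublinear functional N on X
      set N : X → ℝ := fun w => φ (P w) with hNdef
      have hNhom : ∀ c : ℝ, 0 < c → ∀ w : X, N (c • w) = c * N w := by
        intro c hc w
        rw [hNdef]; dsimp only
        rw [hPsmul, hφ_smul c hc _ (hPmem w)]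
      have hNadd : ∀ w w' : X, N (w + w') ≤ N w + N w' := by
        intro w w'
        rw [hNdef]; dsimp only
        rw [hPadd]
        exact hφ_add _ (hPmem w) _ (hPmem w')
      have hvneg : (0:ℝ) ≤ φ v + φ (-v) := by
        have := hφ_add v hv (-v) (Submodule.neg_mem L hv)
        rw [add_neg_cancel, hφ_zero] at this
        linarith
      set f := LinearPMap.mkSpanSingleton (K := ℝ) (L := ℝ) (σ := RingHom.id ℝ) v (φ v) hv0 with hfdef
      have hf : ∀ p : f.domain, f p ≤ N p := by
        rintro ⟨p, hp⟩
        rcases Submodule.mem_span_singleton.mp hp with ⟨c, rfl⟩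
        have happ : f ⟨c • v, hp⟩ = c • φ v := LinearPMap.mkSpanSingleton'_apply v (φ v) _ c hp
        rw [happ]
        have hNc : N (c • v) = φ (c • v) := by
          rw [hNdef]; dsimp only
          rw [hPid _ (Submodule.smul_mem L c hv)]
        rw [hNc, smul_eq_mul]
        rcases lt_trichotomy c 0 with hc | hc | hc
        · have h1 : c • v = (-c) • (-v) := by rw [smul_neg, neg_smul, neg_neg]
          rw [h1, hφ_smul (-c) (by linarith) (-v) (Submodule.neg_mem L hv)]
          nlinarith
        · subst hc; rw [zero_smul, hφ_zero, zero_mul]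
        · rw [hφ_smul c hc v hv]
      obtain ⟨G, hG1, hG2⟩ := exists_extension_of_le_sublinear f N hNhom hNadd hf
      -- turn G into a vector in L
      have hGcont : Continuous G := LinearMap.continuous_of_finiteDimensional G
      set h0 : X := (InnerProductSpace.toDual ℝ X).symm ⟨G, hGcont⟩ with hh0def
      set h : X := P h0 with hhdef
      have hinner : ∀ u ∈ L, ⟪h, u⟫ = G u := by
        intro u hu
        rw [hhdef, hPinner h0 u hu, hh0def, InnerProductSpace.toDual_symm_apply]
        rfl
      have hhL : h ∈ L := hPmem h0
      have hhsub : ∀ y ∈ M, F x + ⟪h, y - x⟫ ≤ F y := by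
        intro y hy
        have huL : y - x ∈ L := hdiffL y hy
        have h1 : ⟪h, y - x⟫ = G (y - x) := hinner _ huL
        have h2 : G (y - x) ≤ φ (y - x) := by
          have := hG2 (y - x)
          rwa [hNdef, show (fun w => φ (P w)) (y-x) = φ (P (y-x)) from rfl, hPid _ huL] at this
        have h3 : φ (y - x) ≤ (F (x + (1:ℝ) • (y - x)) - F x) / 1 := by
          apply hφ_le _ 1 one_pos
          rw [one_smul, add_sub_cancel]
          exact hy
        rw [one_smul, add_sub_cancel] at h3
        simp only [div_one] at h3
        linarith
      have hheq : h = g := by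
        have hmem : h ∈ {h : X | h ∈ L ∧ ∀ y ∈ M, F x + ⟪h, y - x⟫ ≤ F y} := ⟨hhL, hhsub⟩
        rw [hunique] at hmem
        exact hmem
      have hGv : G v = φ v := by
        have hvmem : v ∈ f.domain := by
          rw [hfdef, LinearPMap.domain_mkSpanSingleton]
          exact Submodule.mem_span_singleton_self v
        have h2 : f ⟨v, hvmem⟩ = φ v := LinearPMap.mkSpanSingleton_apply ℝ ℝ (σ := RingHom.id ℝ) hv0 (φ v)
        rw [hG1 ⟨v, hvmem⟩, h2]
      rw [← hGv, ← hinner v hv, hheq]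
  -- directional smallness
  have hdir : ∀ v ∈ L, ∀ ε : ℝ, 0 < ε → ∃ t₀ : ℝ, 0 < t₀ ∧ ∀ t : ℝ, 0 < t → t ≤ t₀ →
      x + t • v ∈ M ∧ F (x + t • v) ≤ F x + t * (⟪g, v⟫ + ε) := by
    intro v hv ε hε
    have h1 : φ v < ⟪g, v⟫ + ε := by rw [hkey v hv]; linarith
    obtain ⟨r, hr, hrlt⟩ := exists_lt_of_csInf_lt (hne v hv) h1
    obtain ⟨t₀, ht₀, hmemt, rfl⟩ := hr
    refine ⟨t₀, ht₀, fun t ht htle => ?_⟩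
    obtain ⟨hm, hq⟩ := hmono v t t₀ ht htle hmemt
    refine ⟨hm, ?_⟩
    have h2 : (F (x + t • v) - F x) / t < ⟪g, v⟫ + ε := lt_of_le_of_lt hq hrlt
    rw [div_lt_iff₀ ht] at h2
    linarith
  -- final assembly
  intro ε hε
  set d := Module.finrank ℝ L with hddef
  set b := stdOrthonormalBasis ℝ L with hbdef
  set ε' : ℝ := ε / (d + 1) with hε'def
  have hε' : 0 < ε' := by positivity
  set dir : Fin d → Bool → X := fun i s => ((if s then (1:ℝ) else -1)) • ((b i : L) : X) with hdirdef
  have hdirL : ∀ i s, dir i s ∈ L := fun i s => Submodule.smul_mem L _ (b i).2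
  have hex : ∀ i : Fin d, ∀ s : Bool, ∃ t₀ : ℝ, 0 < t₀ ∧ ∀ t : ℝ, 0 < t → t ≤ t₀ →
      x + t • (dir i s) ∈ M ∧ F (x + t • (dir i s)) ≤ F x + t * (⟪g, dir i s⟫ + ε') :=
    fun i s => hdir (dir i s) (hdirL i s) ε' hε'
  choose tt htt hprop using hex
  obtain ⟨δ, hδ, hδle⟩ : ∃ δ : ℝ, 0 < δ ∧ ∀ i : Fin d, ∀ s : Bool, δ ≤ tt i s := by
    rcases isEmpty_or_nonempty (Fin d) with hFin | hFin
    · exact ⟨1, one_pos, fun i => (hFin.false i).elim⟩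
    · refine ⟨Finset.univ.inf' (Finset.univ_nonempty) (fun p : Fin d × Bool => tt p.1 p.2),
        ?_, ?_⟩
      · rw [Finset.lt_inf'_iff]
        exact fun p _ => htt p.1 p.2
      · intro i s
        exact Finset.inf'_le _ (Finset.mem_univ (i, s))
  refine ⟨δ / (d + 1), by positivity, ?_⟩
  intro u huL hun hxuM
  rcases eq_or_ne u 0 with rfl | hu0
  · simp
  -- lower bound
  have hlow : 0 ≤ F (x + u) - F x - ⟪g, u⟫ := by
    have := hgsub (x + u) hxuM
    rw [add_sub_cancel_left] at this
    linarith
  -- coordinates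
  set uL : L := ⟨u, huL⟩ with huLdef
  set c : Fin d → ℝ := fun i => ⟪b i, uL⟫ with hcdef
  have hsum : ∑ i, c i • ((b i : L) : X) = u := by
    have h1 := congrArg (fun z : L => (z : X)) (b.sum_repr' uL)
    simpa [hcdef, huLdef] using h1
  have hci : ∀ i, |c i| ≤ ‖u‖ := by
    intro i
    have h1 : |c i| ≤ ‖b i‖ * ‖uL‖ := abs_real_inner_le_norm (b i) uL
    have h2 : ‖b i‖ = 1 := b.orthonormal.1 i
    have h3 : ‖uL‖ = ‖u‖ := rfl
    rw [h2, h3, one_mul] at h1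
    exact h1
  have hd1 : 1 ≤ d := by
    by_contra hcon
    have hd0 : d = 0 := by omega
    have : L = ⊥ := Submodule.finrank_eq_zero.mp hd0
    rw [this] at huL
    exact hu0 (Submodule.mem_bot ℝ |>.mp huL)
  set S : ℝ := ∑ i, |c i| with hSdef
  have hSnn : 0 ≤ S := Finset.sum_nonneg fun i _ => abs_nonneg _
  have hS0 : 0 < S := by
    rcases hSnn.lt_or_eq with h | h
    · exact h
    · exfalso
      have hall : ∀ i ∈ Finset.univ, |c i| = 0 :=
        (Finset.sum_eq_zero_iff_of_nonneg fun i _ => abs_nonneg _).mp h.symm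
      apply hu0
      rw [← hsum]
      apply Finset.sum_eq_zero
      intro i _
      have : c i = 0 := abs_eq_zero.mp (hall i (Finset.mem_univ i))
      rw [this, zero_smul]
  have hSd : S ≤ d * ‖u‖ := by
    calc S ≤ ∑ _i : Fin d, ‖u‖ := Finset.sum_le_sum fun i _ => hci i
    _ = d * ‖u‖ := by rw [Finset.sum_const, Finset.card_univ, Fintype.card_fin, nsmul_eq_mul]
  have hSδ : S ≤ δ := by
    have h1 : (d:ℝ) * ‖u‖ ≤ (d:ℝ) * (δ / (d + 1)) := by
      apply mul_le_mul_of_nonneg_left hun.le (by positivity)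
    have h2 : (d:ℝ) * (δ / (d + 1)) ≤ δ := by
      rw [mul_div_assoc']
      rw [div_le_iff₀ (by positivity : (0:ℝ) < (d:ℝ) + 1)]
      nlinarith [hδ]
    linarith
  -- signs
  set sg : Fin d → Bool := fun i => decide (0 ≤ c i) with hsgdef
  set z : Fin d → X := fun i => x + S • dir i (sg i) with hzdef
  have hz : ∀ i, z i ∈ M ∧ F (z i) ≤ F x + S * (⟪g, dir i (sg i)⟫ + ε') :=
    fun i => hprop i (sg i) S hS0 (hSδ.trans (hδle i (sg i)))
  have hco : ∀ i, |c i| • dir i (sg i) = c i • ((b i : L) : X) := by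
    intro i
    rw [hdirdef]
    dsimp only
    rw [smul_smul]
    congr 1
    by_cases h : 0 ≤ c i
    · simp [hsgdef, h, abs_of_nonneg h]
    · simp [hsgdef, h, abs_of_neg (lt_of_not_ge h)]
  have hdirsum : ∑ i, |c i| • dir i (sg i) = u := by
    rw [Finset.sum_congr rfl fun i _ => hco i]
    exact hsum
  -- Jensen
  have hcm := hconv.map_centerMass_le (t := Finset.univ) (w := fun i => |c i|) (p := z)
    (fun i _ => abs_nonneg _) (by rw [← hSdef]; exact hS0) (fun i _ => (hz i).1)
  have hcme : Finset.univ.centerMass (fun i => |c i|) z = x + u := by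
    rw [Finset.centerMass]
    have h1 : ∑ i, |c i| • z i = S • (x + u) := by
      calc ∑ i, |c i| • z i = ∑ i, (|c i| • x + S • (|c i| • dir i (sg i))) := by
            apply Finset.sum_congr rfl
            intro i _
            rw [hzdef]
            dsimp only
            rw [smul_add, smul_comm]
        _ = (∑ i, |c i| • x) + S • ∑ i, |c i| • dir i (sg i) := by
            rw [Finset.sum_add_distrib, Finset.smul_sum]
        _ = S • x + S • u := by rw [← Finset.sum_smul, ← hSdef, hdirsum]
        _ = S • (x + u) := by rw [smul_add]
    rw [h1, ← hSdef, smul_smul, inv_mul_cancel₀ hS0.ne', one_smul]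
  rw [hcme] at hcm
  have hrhs : Finset.univ.centerMass (fun i => |c i|) (F ∘ z) ≤ F x + ⟪g, u⟫ + S * ε' := by
    rw [Finset.centerMass, ← hSdef, smul_eq_mul]
    rw [inv_mul_le_iff₀ hS0]
    have h1 : ∑ i, |c i| • (F ∘ z) i ≤ ∑ i, |c i| * (F x + S * (⟪g, dir i (sg i)⟫ + ε')) := by
      apply Finset.sum_le_sum
      intro i _
      rw [smul_eq_mul]
      exact mul_le_mul_of_nonneg_left (hz i).2 (abs_nonneg _)
    refine h1.trans ?_
    have h2 : ∑ i, |c i| * (F x + S * (⟪g, dir i (sg i)⟫ + ε'))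
        = S * F x + S * (∑ i, |c i| * ⟪g, dir i (sg i)⟫) + S * (S * ε') := by
      calc ∑ i, |c i| * (F x + S * (⟪g, dir i (sg i)⟫ + ε'))
          = ∑ i, (|c i| * F x + S * (|c i| * ⟪g, dir i (sg i)⟫) + |c i| * (S * ε')) := by
            apply Finset.sum_congr rfl; intro i _; ring
        _ = (∑ i, |c i| * F x) + (∑ i, S * (|c i| * ⟪g, dir i (sg i)⟫))
            + ∑ i, |c i| * (S * ε') := by
            rw [Finset.sum_add_distrib, Finset.sum_add_distrib]
        _ = S * F x + S * (∑ i, |c i| * ⟪g, dir i (sg i)⟫) + S * (S * ε') := by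
            rw [← Finset.sum_mul, ← Finset.mul_sum, ← Finset.sum_mul, ← hSdef]
    rw [h2]
    have h3 : ∑ i, |c i| * ⟪g, dir i (sg i)⟫ = ⟪g, u⟫ := by
      rw [← hdirsum, inner_sum]
      apply Finset.sum_congr rfl
      intro i _
      simp only [hdirdef, real_inner_smul_right, smul_smul]
      ring
    rw [h3]
    exact le_of_eq (by ring)
  have hup : F (x + u) ≤ F x + ⟪g, u⟫ + S * ε' := le_trans hcm hrhs
  rw [abs_of_nonneg hlow]
  have hfin : S * ε' ≤ ε * ‖u‖ := by
    rw [hε'def]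
    rw [mul_div_assoc']
    rw [div_le_iff₀ (by positivity : (0:ℝ) < (d:ℝ) + 1)]
    have : S ≤ (d:ℝ) * ‖u‖ := hSd
    nlinarith [norm_nonneg u, hε.le]
  linarith
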